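/- Consider the reduced roller racer Hamiltonian H̄(θ, φ, p_θ, p_φ) = (1/(2I₁))[p_θ - (1 + (d₁/d₂)cos φ) p_φ]² + (sin²φ/(2m₁d₂²)) p_φ², with m₁, I₁, d₁, d₂ > 0. Let C = d₂√(m₁(2E - I₁v_θ²)) for constants E, v_θ with 2E > I₁v_θ², and define γ̄_φ(φ) = C csc φ and γ̄_θ(φ) = C(1 + (d₁/d₂)cos φ)csc φ + √(I₁(2E - C²/(m₁d₂²))). Then H̄(θ, φ, γ̄_θ(φ), γ̄_φ(φ)) = E for all (θ, φ) with sin φ ≠ 0. -/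

import Mathlib

/-- The explicit one-form constructed for the simplified roller racer solves the
reduced Dirac–Hamilton–Jacobi equation `H̄ ∘ γ̄ = E`. -/
theorem stmt_18 (m₁ I₁ d₁ d₂ E vθ : ℝ) (hm : 0 < m₁) (hI : 0 < I₁)
    (hd₁ : 0 < d₁) (hd₂ : 0 < d₂) (hE : I₁ * vθ^2 < 2*E)
    (C : ℝ) (hC : C = d₂ * Real.sqrt (m₁ * (2*E - I₁*vθ^2)))
    (γφ γθ : ℝ → ℝ)
    (hγφ : ∀ φ, γφ φ = C / Real.sin φ)
    (hγθ : ∀ φ, γθ φ = C * (1 + (d₁/d₂) * Real.cos φ) / Real.sin φ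
      + Real.sqrt (I₁ * (2*E - C^2/(m₁*d₂^2)))) :
    ∀ θ φ : ℝ, Real.sin φ ≠ 0 →
      (1/(2*I₁)) * (γθ φ - (1 + (d₁/d₂) * Real.cos φ) * γφ φ)^2
      + ((Real.sin φ)^2/(2*m₁*d₂^2)) * (γφ φ)^2 = E := by
  intro θ φ hs
  have harg : 0 ≤ m₁ * (2*E - I₁*vθ^2) := by nlinarith [sq_nonneg vθ]
  have hC2 : C^2 = d₂^2 * (m₁ * (2*E - I₁*vθ^2)) := by
    rw [hC, mul_pow, Real.sq_sqrt harg]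
  have hCmd : C^2/(m₁*d₂^2) = 2*E - I₁*vθ^2 := by
    field_simp [hm.ne', hd₂.ne'] at hC2 ⊢; nlinarith [hC2]
  have h1 : γθ φ - (1 + (d₁/d₂) * Real.cos φ) * γφ φ
      = Real.sqrt (I₁ * (2*E - C^2/(m₁*d₂^2))) := by
    rw [hγθ, hγφ]; field_simp; ring
  have h2 : (γθ φ - (1 + (d₁/d₂) * Real.cos φ) * γφ φ)^2
      = I₁ * (I₁*vθ^2) := by
    rw [h1, Real.sq_sqrt, hCmd]; ring
    rw [hCmd]; nlinarith [mul_nonneg hI.le (mul_nonneg hI.le (sq_nonneg vθ))]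
  rw [h2, hγφ]
  have hs2 : (Real.sin φ)^2 ≠ 0 := pow_ne_zero 2 hs
  field_simp
  linear_combination hC2
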